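/- The formal power series s^11 does not belong to the closed subalgebra of ℂ[[s]] generated by s^3 and s^7 + s^8; that is, there is no formal power series F(X,Y) in two variables over ℂ such that substituting X = s^3 and Y = s^7 + s^8 yields s^11. -/

import Mathlib

open PowerSeries

lemma coeff_onX (j m : ℕ) : PowerSeries.coeff (R := ℂ) m ((1 + X : PowerSeries ℂ)^j) = j.choose m := by
  have h : ((1 + Polynomial.X : Polynomial ℂ) : PowerSeries ℂ) = 1 + X := by
    simp
  rw [← h, ← Polynomial.coe_pow, Polynomial.coeff_coe, Polynomial.coeff_one_add_X_pow]

lemma keycoeff (n i j : ℕ) :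
    PowerSeries.coeff (R := ℂ) n (((X : PowerSeries ℂ)^3)^i * ((X : PowerSeries ℂ)^7 + X^8)^j)
      = if 3*i+7*j ≤ n then (j.choose (n - (3*i+7*j)) : ℂ) else 0 := by
  have h : ((X : PowerSeries ℂ)^3)^i * ((X : PowerSeries ℂ)^7 + X^8)^j
      = (1 + X)^j * X^(3*i+7*j) := by
    have h2 : ((X : PowerSeries ℂ)^7 + X^8) = X^7*(1+X) := by ring
    rw [h2, mul_pow, ← pow_mul, ← pow_mul, pow_add]
    ring
  rw [h, PowerSeries.coeff_mul_X_pow']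
  split <;> simp [coeff_onX]

/-- Substitution of `x = s^3`, `u = s^7 + s^8` into a formal power series `F(X, Y)` in two
variables.  Since `x` and `u` have positive order, the coefficient of `s^n` in `F(x, u)` is the
(finite) sum of the contributions of the monomials `F_{ij} x^i u^j`; indices `i, j > n` contribute
zero, so it suffices to sum over `i, j ≤ n`. -/
noncomputable def substXU (F : MvPowerSeries (Fin 2) ℂ) : PowerSeries ℂ :=
  PowerSeries.mk fun n =>
    ∑ i ∈ Finset.range (n + 1), ∑ j ∈ Finset.range (n + 1),
      MvPowerSeries.coeff (R := ℂ) (Finsupp.single 0 i + Finsupp.single 1 j) F *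
        PowerSeries.coeff (R := ℂ) n (((X : PowerSeries ℂ) ^ 3) ^ i * ((X : PowerSeries ℂ) ^ 7 + X ^ 8) ^ j)

/-- `s^11` is not in the closed subalgebra of `ℂ⟦s⟧` generated by `s^3` and `s^7 + s^8`:
no two-variable formal power series `F` satisfies `F(s^3, s^7 + s^8) = s^11`. -/
theorem stmt2 : ¬ ∃ F : MvPowerSeries (Fin 2) ℂ, substXU F = (X : PowerSeries ℂ) ^ 11 := by
  rintro ⟨F, hF⟩
  have h10 := congrArg (PowerSeries.coeff (R := ℂ) 10) hF
  have h11 := congrArg (PowerSeries.coeff (R := ℂ) 11) hF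
  simp [substXU, keycoeff, Finset.sum_range_succ, PowerSeries.coeff_X_pow, Nat.choose] at h10 h11
  rw [h10] at h11
  exact one_ne_zero h11.symm
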